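/- Let s : {1,2,...} → ℕ satisfy s_k ≥ 1 and let σ : {1,2,...} → ℝ satisfy σ_k > 0. Let p_0 ∈ (1,∞) and suppose there is ε > 0 with [p_0−ε, p_0+ε] ⊂ (1,∞) such that M_p(σ,s) > 0 for all p ∈ [p_0−ε, p_0+ε]. Then the function p ↦ M_p(σ,s) is continuous at p_0. -/

import Mathlib

open scoped ENNReal NNReal
open Filter MeasureTheory Topology

/-- The radially symmetric `p`-modulus `M_p(σ, s)` of the family of infinite
descending paths in a radially symmetric infinite tree whose `k`-th shell has
`s k` edges, each of weight `σ k`: the infimum of the `p`-energies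
`Σ_k s_k σ_k ρ_k^p` over all densities `ρ` with `Σ_k ρ_k ≥ 1`. -/
noncomputable def Mmod (p : ℝ) (σ : ℕ → ℝ≥0) (s : ℕ → ℕ) : ℝ≥0∞ :=
  ⨅ ρ ∈ {ρ : ℕ → ℝ≥0 | 1 ≤ ∑' k : ℕ, (ρ k : ℝ≥0∞)},
    ∑' k : ℕ, (s k : ℝ≥0∞) * (σ k : ℝ≥0∞) * (ρ k : ℝ≥0∞) ^ p

/-- The series `Σ_k (s_k σ_k)^(-1/(p-1))` whose value determines `M_p`. -/
noncomputable def Sfun (σ : ℕ → ℝ≥0) (s : ℕ → ℕ) (p : ℝ) : ℝ≥0∞ :=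
  ∑' k : ℕ, ((s k : ℝ≥0∞) * (σ k : ℝ≥0∞)) ^ (-(1 / (p - 1)))

/-- Explicit formula for the radially symmetric `p`-modulus. -/
theorem Mmod_eq (s : ℕ → ℕ) (hs : ∀ k, 1 ≤ s k) (σ : ℕ → ℝ≥0) (hσ : ∀ k, 0 < σ k)
    (p : ℝ) (hp : 1 < p) : Mmod p σ s = Sfun σ s p ^ (1 - p) := by
  have hp0 : (0:ℝ) < p := lt_trans one_pos hp
  have hp1 : (0:ℝ) < p - 1 := by linarith
  set w : ℕ → ℝ≥0∞ := fun k => (s k : ℝ≥0∞) * (σ k : ℝ≥0∞) with hw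
  have hw0 : ∀ k, w k ≠ 0 := by
    intro k
    simp only [hw, mul_ne_zero_iff, Nat.cast_ne_zero, ENNReal.coe_ne_zero]
    exact ⟨Nat.one_le_iff_ne_zero.mp (hs k), (hσ k).ne'⟩
  have hwt : ∀ k, w k ≠ ∞ := fun k =>
    ENNReal.mul_ne_top (ENNReal.natCast_ne_top _) ENNReal.coe_ne_top
  set q : ℝ := 1 / (p - 1) with hq
  have hq0 : 0 < q := by positivity
  have hterm0 : ∀ k, w k ^ (-q) ≠ 0 := fun k =>
    (ENNReal.rpow_pos (pos_iff_ne_zero.mpr (hw0 k)) (hwt k)).ne'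
  have htermt : ∀ k, w k ^ (-q) ≠ ∞ := fun k => by
    simp [ENNReal.rpow_eq_top_iff, hw0 k, hwt k]
  have hS : Sfun σ s p = ∑' k, w k ^ (-q) := rfl
  have hS0 : Sfun σ s p ≠ 0 := by
    rw [hS]
    exact fun h => hterm0 0 (le_antisymm (h ▸ ENNReal.le_tsum 0) (zero_le))
  have h1p : 1 - p < 0 := by linarith
  apply le_antisymm
  · -- upper bound
    have hub : ∀ N : ℕ, Mmod p σ s ≤ (∑ k ∈ Finset.range N, w k ^ (-q)) ^ (1 - p) := by
      intro N
      rcases Nat.eq_zero_or_pos N with rfl | hN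
      · simp [ENNReal.zero_rpow_of_neg h1p]
      set SN : ℝ≥0∞ := ∑ k ∈ Finset.range N, w k ^ (-q) with hSN
      have hSN0 : SN ≠ 0 := by
        have : w 0 ^ (-q) ≤ SN := Finset.single_le_sum (f := fun k => w k ^ (-q))
          (fun i _ => zero_le) (Finset.mem_range.mpr hN)
        exact fun h => hterm0 0 (le_antisymm (h ▸ this) (zero_le))
      have hSNt : SN ≠ ∞ := by
        rw [hSN]
        exact (ENNReal.sum_lt_top.mpr fun k _ => (htermt k).lt_top).ne
      set ρ : ℕ → ℝ≥0 := fun k => if k < N then (w k ^ (-q) / SN).toNNReal else 0 with hρ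
      have hρcoe : ∀ k, (ρ k : ℝ≥0∞) = if k < N then w k ^ (-q) / SN else 0 := by
        intro k
        by_cases h : k < N
        · rw [hρ]
          simp only [if_pos h]
          exact ENNReal.coe_toNNReal (ENNReal.div_lt_top (htermt k) hSN0).ne
        · rw [hρ]
          simp [h]
      have hρmem : ρ ∈ {ρ : ℕ → ℝ≥0 | 1 ≤ ∑' k : ℕ, (ρ k : ℝ≥0∞)} := by
        have : ∑' k : ℕ, (ρ k : ℝ≥0∞) = ∑ k ∈ Finset.range N, w k ^ (-q) / SN := by
          rw [tsum_eq_sum (s := Finset.range N)]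
          · exact Finset.sum_congr rfl fun k hk => by
              rw [hρcoe, if_pos (Finset.mem_range.mp hk)]
          · intro k hk
            rw [hρcoe, if_neg (fun h => hk (Finset.mem_range.mpr h))]
        rw [Set.mem_setOf_eq, this]
        simp only [div_eq_mul_inv, ← Finset.sum_mul, ← hSN]
        rw [ENNReal.mul_inv_cancel hSN0 hSNt]
      refine le_trans (iInf₂_le ρ hρmem) (le_of_eq ?_)
      have hen : ∀ k, (s k : ℝ≥0∞) * (σ k : ℝ≥0∞) * (ρ k : ℝ≥0∞) ^ p
          = if k < N then w k ^ (-q) / SN ^ p else 0 := by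
        intro k
        rw [show (s k : ℝ≥0∞) * (σ k : ℝ≥0∞) = w k from rfl, hρcoe]
        split
        · rw [ENNReal.div_rpow_of_nonneg _ _ hp0.le, ← ENNReal.rpow_mul,
            ← mul_div_assoc]
          congr 1
          have h1q : w k * w k ^ (-q * p) = w k ^ (1 + -q * p) := by
            rw [ENNReal.rpow_add _ _ (hw0 k) (hwt k), ENNReal.rpow_one]
          rw [h1q]
          congr 1
          have : p - 1 ≠ 0 := hp1.ne'
          rw [hq]
          field_simp
          ring
        · simp [ENNReal.zero_rpow_of_pos hp0]
      calc ∑' k : ℕ, (s k : ℝ≥0∞) * (σ k : ℝ≥0∞) * (ρ k : ℝ≥0∞) ^ p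
          = ∑ k ∈ Finset.range N, w k ^ (-q) / SN ^ p := by
            rw [tsum_congr hen, tsum_eq_sum (s := Finset.range N)
              (fun k hk => if_neg (fun h => hk (Finset.mem_range.mpr h)))]
            exact Finset.sum_congr rfl fun k hk => if_pos (Finset.mem_range.mp hk)
        _ = SN / SN ^ p := by
            simp only [div_eq_mul_inv, ← Finset.sum_mul, ← hSN]
        _ = SN ^ (1 - p) := by
            rw [ENNReal.rpow_sub _ _ hSN0 hSNt, ENNReal.rpow_one]
    have htend : Tendsto (fun N : ℕ => (∑ k ∈ Finset.range N, w k ^ (-q)) ^ (1 - p))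
        atTop (𝓝 (Sfun σ s p ^ (1 - p))) := by
      refine ((ENNReal.continuous_rpow_const (y := 1 - p)).tendsto _).comp ?_
      rw [hS]
      exact ENNReal.tendsto_nat_tsum fun k => w k ^ (-q)
    exact ge_of_tendsto htend (Eventually.of_forall hub)
  · -- lower bound
    refine le_iInf₂ fun ρ hρ => ?_
    rcases eq_or_ne (Sfun σ s p) ∞ with hStop | hSt
    · rw [hStop, ENNReal.top_rpow_of_neg h1p]; exact zero_le
    set E : ℝ≥0∞ := ∑' k : ℕ, (s k : ℝ≥0∞) * (σ k : ℝ≥0∞) * (ρ k : ℝ≥0∞) ^ p with hE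
    rcases eq_or_ne E ∞ with hEtop | hEt
    · exact hEtop.symm ▸ le_top
    have hconj : p.HolderConjugate (p / (p - 1)) := by
      exact (Real.holderConjugate_iff_eq_conjExponent hp).mpr rfl
    set p' : ℝ := p / (p - 1) with hp'
    have hp'0 : 0 < p' := by positivity
    have hmain : (1:ℝ≥0∞) ≤ E ^ (1/p) * Sfun σ s p ^ (1/p') := by
      have hfg : ∀ k : ℕ, (ρ k : ℝ≥0∞) = (w k ^ (1/p) * (ρ k : ℝ≥0∞)) * w k ^ (-(1/p)) := by
        intro k
        rw [mul_comm (w k ^ (1/p)) _, mul_assoc, ← ENNReal.rpow_add _ _ (hw0 k) (hwt k)]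
        simp
      have hHold := ENNReal.lintegral_mul_le_Lp_mul_Lq (Measure.count (α := ℕ)) hconj
        (f := fun k => w k ^ (1/p) * (ρ k : ℝ≥0∞)) (g := fun k => w k ^ (-(1/p)))
        (measurable_of_countable _).aemeasurable (measurable_of_countable _).aemeasurable
      simp only [Pi.mul_apply, lintegral_count] at hHold
      have h1 : ∑' k : ℕ, (w k ^ (1/p) * (ρ k : ℝ≥0∞)) ^ p = E := by
        rw [hE]
        refine tsum_congr fun k => ?_
        rw [ENNReal.mul_rpow_of_nonneg _ _ hp0.le, ← ENNReal.rpow_mul,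
          one_div_mul_cancel hp0.ne', ENNReal.rpow_one]
      have h2 : ∑' k : ℕ, (w k ^ (-(1/p))) ^ (p') = Sfun σ s p := by
        refine tsum_congr fun k => ?_
        rw [← ENNReal.rpow_mul]
        congr 1
        rw [hp']
        field_simp
      rw [h1, h2] at hHold
      calc (1:ℝ≥0∞) ≤ ∑' k : ℕ, (ρ k : ℝ≥0∞) := hρ
        _ = ∑' k : ℕ, (w k ^ (1/p) * (ρ k : ℝ≥0∞)) * w k ^ (-(1/p)) := tsum_congr hfg
        _ ≤ E ^ (1/p) * Sfun σ s p ^ (1/p') := hHold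
    -- from hmain deduce Sfun^(1-p) ≤ E
    have hSp't : Sfun σ s p ^ (1/p') ≠ ∞ := ENNReal.rpow_ne_top_of_nonneg (by positivity) hSt
    have hSp'0 : Sfun σ s p ^ (1/p') ≠ 0 :=
      (ENNReal.rpow_pos (pos_iff_ne_zero.mpr hS0) hSt).ne'
    have hinv : (Sfun σ s p ^ (1/p'))⁻¹ ≤ E ^ (1/p) := by
      rw [ENNReal.inv_le_iff_le_mul (fun _ => hSp'0) (fun h => absurd h hSp't)]
      calc (1:ℝ≥0∞) ≤ E ^ (1/p) * Sfun σ s p ^ (1/p') := hmain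
        _ = Sfun σ s p ^ (1/p') * E ^ (1/p) := mul_comm _ _
    have := ENNReal.rpow_le_rpow hinv hp0.le
    rw [← ENNReal.rpow_mul, one_div_mul_cancel hp0.ne', ENNReal.rpow_one] at this
    refine le_trans (le_of_eq ?_) this
    rw [← ENNReal.rpow_neg, ← ENNReal.rpow_mul]
    congr 1
    rw [hp']
    field_simp
    ring

/-- if the modulus is positive on a closed interval
`[p₀ - ε, p₀ + ε] ⊂ (1, ∞)`, then `p ↦ M_p(σ, s)` is continuous at `p₀`. -/
theorem stmt13 (s : ℕ → ℕ) (hs : ∀ k, 1 ≤ s k) (σ : ℕ → ℝ≥0) (hσ : ∀ k, 0 < σ k)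
    (p₀ ε : ℝ) (hε : 0 < ε) (h1 : 1 < p₀ - ε)
    (hpos : ∀ p ∈ Set.Icc (p₀ - ε) (p₀ + ε), 0 < Mmod p σ s) :
    ContinuousAt (fun p : ℝ => Mmod p σ s) p₀ := by
  set a : ℝ := p₀ - ε with ha
  set b : ℝ := p₀ + ε with hb
  have hab : a < b := by rw [ha, hb]; linarith
  have hap : a < p₀ := by rw [ha]; linarith
  have hpb : p₀ < b := by rw [hb]; linarith
  have h1p : ∀ p ∈ Set.Icc a b, 1 < p := fun p hp => lt_of_lt_of_le h1 hp.1
  set w : ℕ → ℝ≥0∞ := fun k => (s k : ℝ≥0∞) * (σ k : ℝ≥0∞) with hw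
  have hw0 : ∀ k, w k ≠ 0 := by
    intro k
    simp only [hw, mul_ne_zero_iff, Nat.cast_ne_zero, ENNReal.coe_ne_zero]
    exact ⟨Nat.one_le_iff_ne_zero.mp (hs k), (hσ k).ne'⟩
  have hwt : ∀ k, w k ≠ ∞ := fun k =>
    ENNReal.mul_ne_top (ENNReal.natCast_ne_top _) ENNReal.coe_ne_top
  have htermt : ∀ (x : ℝ) k, w k ^ x ≠ ∞ := fun x k => by
    simp [ENNReal.rpow_eq_top_iff, hw0 k, hwt k]
  -- finiteness of Sfun on the interval
  have hfin : ∀ p ∈ Set.Icc a b, Sfun σ s p ≠ ∞ := by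
    intro p hp h
    have h1p' := h1p p hp
    have := hpos p hp
    rw [Mmod_eq s hs σ hσ p h1p', h, ENNReal.top_rpow_of_neg (by linarith)] at this
    exact lt_irrefl _ this
  -- real-valued weights
  set W : ℕ → ℝ := fun k => (w k).toReal with hW
  have hW0 : ∀ k, 0 < W k := fun k =>
    ENNReal.toReal_pos (hw0 k) (hwt k)
  set g : ℝ → ℕ → ℝ := fun p k => W k ^ (-(1 / (p - 1))) with hg
  have hg0 : ∀ p k, 0 < g p k := fun p k => Real.rpow_pos_of_pos (hW0 k) _
  have hgtoReal : ∀ p k, g p k = (w k ^ (-(1 / (p - 1)))).toReal := fun p k =>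
    ENNReal.toReal_rpow _ _
  have hsum : ∀ p ∈ Set.Icc a b, Summable (g p) := by
    intro p hp
    have := ENNReal.summable_toReal (f := fun k => w k ^ (-(1 / (p - 1)))) (hfin p hp)
    exact this.congr fun k => (hgtoReal p k).symm
  set F : ℝ → ℝ := fun p => ∑' k, g p k with hF
  have hSF : ∀ p ∈ Set.Icc a b, Sfun σ s p = ENNReal.ofReal (F p) := by
    intro p hp
    have h1 : (Sfun σ s p).toReal = F p := by
      rw [show Sfun σ s p = ∑' k, w k ^ (-(1 / (p - 1))) from rfl,
        ENNReal.tsum_toReal_eq (fun k => htermt _ k)]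
      exact tsum_congr fun k => (hgtoReal p k).symm
    rw [← h1, ENNReal.ofReal_toReal (hfin p hp)]
  have hFpos : ∀ p ∈ Set.Icc a b, 0 < F p := by
    intro p hp
    exact lt_of_lt_of_le (hg0 p 0) (Summable.le_tsum (hsum p hp) 0 fun i _ => (hg0 p i).le)
  -- domination
  set bound : ℕ → ℝ := fun k => g a k + g b k with hbound
  have hbsum : Summable bound :=
    (hsum a ⟨le_refl a, hab.le⟩).add (hsum b ⟨hab.le, le_refl b⟩)
  have hdom : ∀ p ∈ Set.Icc a b, ∀ k, ‖g p k‖ ≤ bound k := by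
    intro p hp k
    rw [Real.norm_of_nonneg (hg0 p k).le, hbound]
    have ha1 : (0:ℝ) < a - 1 := by linarith
    have hp1 : (0:ℝ) < p - 1 := by have := h1p p hp; linarith
    have hb1 : (0:ℝ) < b - 1 := by linarith
    have hxa : -(1 / (a - 1)) ≤ -(1 / (p - 1)) := by
      have := one_div_le_one_div_of_le ha1 (by linarith [hp.1] : a - 1 ≤ p - 1)
      linarith
    have hxb : -(1 / (p - 1)) ≤ -(1 / (b - 1)) := by
      have := one_div_le_one_div_of_le hp1 (by linarith [hp.2] : p - 1 ≤ b - 1)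
      linarith
    rcases le_or_gt 1 (W k) with hWk | hWk
    · calc g p k ≤ g b k := Real.rpow_le_rpow_of_exponent_le hWk hxb
        _ ≤ g a k + g b k := le_add_of_nonneg_left (hg0 a k).le
    · calc g p k ≤ g a k := Real.rpow_le_rpow_of_exponent_ge (hW0 k) hWk.le hxa
        _ ≤ g a k + g b k := le_add_of_nonneg_right (hg0 b k).le
  -- continuity of F at p₀
  have hIcc : Set.Icc a b ∈ 𝓝 p₀ := Icc_mem_nhds hap hpb
  have hFt : Tendsto F (𝓝 p₀) (𝓝 (F p₀)) := by
    refine tendsto_tsum_of_dominated_convergence hbsum (fun k => ?_) ?_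
    · have hc : ContinuousAt (fun p : ℝ => -(1 / (p - 1))) p₀ := by
        have h0 : p₀ - 1 ≠ 0 := by have := h1p p₀ ⟨hap.le, hpb.le⟩; linarith
        exact ((continuousAt_const.div ((continuous_id.sub continuous_const).continuousAt)
          h0)).neg
      exact (Real.continuousAt_const_rpow (hW0 k).ne').comp hc
    · filter_upwards [hIcc] with p hp
      exact hdom p hp
  -- final assembly
  have hF0 : F p₀ ≠ 0 := (hFpos p₀ ⟨hap.le, hpb.le⟩).ne'
  have hcont : ContinuousAt (fun p : ℝ => ENNReal.ofReal (F p ^ (1 - p))) p₀ := by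
    have h₃ : ContinuousAt (fun p : ℝ => F p ^ (1 - p)) p₀ :=
      ContinuousAt.rpow hFt ((continuous_const.sub continuous_id).continuousAt)
        (Or.inl hF0)
    exact ENNReal.continuous_ofReal.continuousAt.comp h₃
  refine hcont.congr ?_
  filter_upwards [hIcc] with p hp
  rw [Mmod_eq s hs σ hσ p (h1p p hp), hSF p hp,
    ENNReal.ofReal_rpow_of_pos (hFpos p hp)]
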